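/- Under the hypotheses of the previous lemma, for any integer c_i ≤ c̄, the (c̄ - c_i)-th total derivative ω₂ = ω₁^{(c̄ - c_i)} of ω₁ = y_r + (v_r/v_l)·x_l^{(d_l - c̄)} satisfies: ν_{x_j}(ω₂) < d_j - c_i for j ∈ S \ {l}, and ν_{x_j}(ω₂) ≤ d_j - c_i otherwise; moreover ν_{y_r}(ω₂) = c̄ - c_i. -/

import Mathlib

open MvPolynomial

/-- Formal variables for the expression substitution (ES) setting: `t`
(= `none`), the derivatives `x_j^{(k)}` (= `some (.inl (j, k))`), and the
derivatives `y_r^{(k)}` of the newly introduced variables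
(= `some (.inr (r, k))`). -/
abbrev EVar (n : ℕ) := Option ((Fin n × ℕ) ⊕ (Fin n × ℕ))

/-- Differential polynomials in these variables, with real coefficients. -/
abbrev EPoly (n : ℕ) := MvPolynomial (EVar n) ℝ

/-- The variable `x_j^{(k)}`. -/
noncomputable def Xv {n : ℕ} (j : Fin n) (k : ℕ) : EPoly n := X (some (Sum.inl (j, k)))

/-- The variable `y_r^{(k)}`. -/
noncomputable def Yv {n : ℕ} (r : Fin n) (k : ℕ) : EPoly n := X (some (Sum.inr (r, k)))

/-- The total time derivative operator `D`, acting by the chain rule. -/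
noncomputable def Dop {n : ℕ} : EPoly n → EPoly n :=
  MvPolynomial.mkDerivation ℝ fun v : EVar n =>
    match v with
    | none => (1 : EPoly n)
    | some (Sum.inl (j, k)) => Xv j (k + 1)
    | some (Sum.inr (r, k)) => Yv r (k + 1)

/-- `hodX w j`: highest order of a derivative of `x_j` occurring in `w`
(`⊥` = `-∞` if absent). -/
noncomputable def hodX {n : ℕ} (w : EPoly n) (j : Fin n) : WithBot ℤ :=
  w.vars.sup fun v =>
    match v with
    | some (Sum.inl (j', k)) => if j' = j then ((k : ℤ) : WithBot ℤ) else ⊥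
    | _ => ⊥

/-- `hodY w r`: highest order of a derivative of `y_r` occurring in `w`. -/
noncomputable def hodY {n : ℕ} (w : EPoly n) (r : Fin n) : WithBot ℤ :=
  w.vars.sup fun v =>
    match v with
    | some (Sum.inr (r', k)) => if r' = r then ((k : ℤ) : WithBot ℤ) else ⊥
    | _ => ⊥

section DegHelpers
variable {σ : Type*} [DecidableEq σ]


noncomputable def psi (i : σ) : MvPolynomial σ ℝ →ₐ[ℝ] Polynomial (MvPolynomial σ ℝ) :=
  aeval fun j => if j = i then Polynomial.C (X j) * Polynomial.X else Polynomial.C (X j)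

theorem psi_monomial (i : σ) (s : σ →₀ ℕ) (a : ℝ) :
    psi i (monomial s a) = Polynomial.C (monomial s a) * Polynomial.X ^ (s i) := by
  classical
  rw [psi, aeval_monomial, monomial_eq]
  have key : (s.prod fun j k =>
      (if j = i then Polynomial.C (X j) * Polynomial.X else Polynomial.C (X j)) ^ k)
      = Polynomial.C (s.prod fun j k => (X j : MvPolynomial σ ℝ) ^ k) * Polynomial.X ^ (s i) := by
    rw [Finsupp.prod, Finsupp.prod, map_prod]
    by_cases hi : i ∈ s.support
    · rw [← Finset.prod_erase_mul _ _ hi, ← Finset.prod_erase_mul _ _ hi]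
      rw [Finset.prod_congr rfl (fun j hj => by rw [if_neg (Finset.ne_of_mem_erase hj)])]
      rw [if_pos rfl, mul_pow, ← Polynomial.C_pow]
      simp only [Polynomial.C_pow]
      ring
    · have h0 : s i = 0 := Finsupp.notMem_support_iff.mp hi
      rw [h0, pow_zero, mul_one]
      exact Finset.prod_congr rfl fun j hj => by
        rw [if_neg (by rintro rfl; exact hi hj), Polynomial.C_pow]
  rw [key]
  have : (algebraMap ℝ (Polynomial (MvPolynomial σ ℝ))) a = Polynomial.C (C a) := by
    simp [Polynomial.algebraMap_apply, algebraMap_eq]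
  rw [this, map_mul]
  ring

theorem psi_coeff (i : σ) (p : MvPolynomial σ ℝ) (k : ℕ) :
    (psi i p).coeff k = ∑ s ∈ p.support, if s i = k then monomial s (coeff s p) else 0 := by
  classical
  conv_lhs => rw [p.as_sum, map_sum, Polynomial.finset_sum_coeff]
  refine Finset.sum_congr rfl fun s hs => ?_
  rw [psi_monomial, Polynomial.coeff_C_mul, Polynomial.coeff_X_pow]
  by_cases h : s i = k
  · simp [h]
  · rw [if_neg h, if_neg (fun h2 => h h2.symm), mul_zero]

theorem psi_coeff_ne_zero (i : σ) {p : MvPolynomial σ ℝ} {s₀ : σ →₀ ℕ}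
    (hs₀ : s₀ ∈ p.support) : (psi i p).coeff (s₀ i) ≠ 0 := by
  classical
  intro h1
  rw [psi_coeff] at h1
  have h2 := congrArg (coeff s₀) h1
  rw [coeff_sum] at h2
  simp only [apply_ite (coeff s₀), coeff_monomial, coeff_zero] at h2
  rw [Finset.sum_eq_single s₀ (fun b hb hne => by simp [if_neg hne, ite_self]) (fun h' => absurd hs₀ h')] at h2
  simp at h2
  exact (mem_support_iff.mp hs₀) h2

theorem psi_ne_zero (i : σ) {p : MvPolynomial σ ℝ} (hp : p ≠ 0) : psi i p ≠ 0 := by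
  obtain ⟨s₀, hs₀⟩ := (support_nonempty (p := p)).mpr hp
  exact fun h => psi_coeff_ne_zero i hs₀ (by rw [h]; simp)

theorem psi_natDegree (i : σ) (p : MvPolynomial σ ℝ) :
    (psi i p).natDegree = degreeOf i p := by
  classical
  rcases eq_or_ne p 0 with rfl | hp
  · simp
  apply le_antisymm
  · rw [Polynomial.natDegree_le_iff_coeff_eq_zero]
    intro k hk
    rw [psi_coeff]
    refine Finset.sum_eq_zero fun s hs => ?_
    have : s i ≤ degreeOf i p := monomial_le_degreeOf i hs
    rw [if_neg (by omega)]
  · have hne : p.support.Nonempty := (support_nonempty (p := p)).mpr hp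
    obtain ⟨s₀, hs₀, he⟩ := Finset.exists_mem_eq_sup p.support hne (fun s : σ →₀ ℕ => (s i : ℕ))
    rw [degreeOf_eq_sup, he]
    exact Polynomial.le_natDegree_of_ne_zero (psi_coeff_ne_zero i hs₀)

theorem degreeOf_mul_eq' (i : σ) (p q : MvPolynomial σ ℝ) (hp : p ≠ 0) (hq : q ≠ 0) :
    degreeOf i (p * q) = degreeOf i p + degreeOf i q := by
  rw [← psi_natDegree, ← psi_natDegree, ← psi_natDegree, map_mul]
  exact Polynomial.natDegree_mul (psi_ne_zero i hp) (psi_ne_zero i hq)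

theorem vars_subset_mul_left (p : MvPolynomial σ ℝ) {q : MvPolynomial σ ℝ} (hq : q ≠ 0) :
    p.vars ⊆ (q * p).vars := by
  rcases eq_or_ne p 0 with rfl | hp
  · simp
  intro i hi
  rw [mem_vars] at hi
  obtain ⟨d, hd, hid⟩ := hi
  have h1 : 0 < degreeOf i p :=
    lt_of_lt_of_le (Nat.pos_of_ne_zero (Finsupp.mem_support_iff.mp hid)) (monomial_le_degreeOf i hd)
  have h2 : 0 < degreeOf i (q * p) := by
    rw [degreeOf_mul_eq' i q p hq hp]; omega
  have hqp : q * p ≠ 0 := mul_ne_zero hq hp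
  have hne : (q * p).support.Nonempty := (support_nonempty (p := q * p)).mpr hqp
  obtain ⟨m, hm, he⟩ := Finset.exists_mem_eq_sup (q * p).support hne (fun s : σ →₀ ℕ => (s i : ℕ))
  rw [degreeOf_eq_sup, he] at h2
  exact (mem_vars i).mpr ⟨m, hm, Finsupp.mem_support_iff.mpr (by omega)⟩

end DegHelpers

/-- Successor map on variables. -/
def esucc {n : ℕ} : EVar n → EVar n
  | none => none
  | some (Sum.inl (j, k)) => some (Sum.inl (j, k + 1))
  | some (Sum.inr (r, k)) => some (Sum.inr (r, k + 1))

/-- the function whose sup is hodX -/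
def fX {n : ℕ} (j : Fin n) : EVar n → WithBot ℤ := fun v =>
    match v with
    | some (Sum.inl (j', k)) => if j' = j then ((k : ℤ) : WithBot ℤ) else ⊥
    | _ => ⊥
def fY {n : ℕ} (r : Fin n) : EVar n → WithBot ℤ := fun v =>
    match v with
    | some (Sum.inr (r', k)) => if r' = r then ((k : ℤ) : WithBot ℤ) else ⊥
    | _ => ⊥

theorem hodX_eq {n : ℕ} (w : EPoly n) (j : Fin n) : hodX w j = w.vars.sup (fX j) := rfl
theorem hodY_eq {n : ℕ} (w : EPoly n) (r : Fin n) : hodY w r = w.vars.sup (fY r) := rfl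

theorem vars_Dop {n : ℕ} (q : EPoly n) :
    (Dop q).vars ⊆ q.vars ∪ q.vars.image esucc := by
  classical
  have hq : Dop q = ∑ s ∈ q.support, Dop (monomial s (coeff s q)) := by
    rw [Dop]
    conv_lhs => rw [q.as_sum]
    exact map_sum _ _ _
  rw [hq]
  refine (vars_sum_subset _ _).trans ?_
  rw [Finset.biUnion_subset]
  intro s hs
  rw [Dop, mkDerivation_monomial]
  have hsub1 : s.support ⊆ q.vars := fun v hv => (mem_vars v).mpr ⟨s, hs, hv⟩
  rw [smul_eq_C_mul]
  refine (vars_mul _ _).trans ?_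
  rw [vars_C, Finset.empty_union]
  simp only [Finsupp.sum]
  refine (vars_sum_subset _ _).trans ?_
  rw [Finset.biUnion_subset]
  intro v hv
  have h1 : (monomial (s - Finsupp.single v 1) ((s v : ℝ)) •
      (match v with
        | none => (1 : EPoly n)
        | some (Sum.inl (j, k)) => Xv j (k + 1)
        | some (Sum.inr (r, k)) => Yv r (k + 1))).vars ⊆
      (s - Finsupp.single v 1).support ∪ {esucc v} := by
    rw [smul_eq_mul]
    refine (vars_mul _ _).trans (Finset.union_subset_union (by
      rcases eq_or_ne ((s v : ℝ)) 0 with h0 | h0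
      · rw [h0, map_zero, vars_0]; exact Finset.empty_subset _
      · rw [vars_monomial h0]) ?_)
    match v with
    | none => dsimp only; rw [vars_one]; exact Finset.empty_subset _
    | some (Sum.inl (j, k)) =>
        dsimp only
        rw [show Xv j (k+1) = X (σ := EVar n) (some (Sum.inl (j, k+1))) from rfl, vars_X]
        simp [esucc]
    | some (Sum.inr (r, k)) =>
        dsimp only
        rw [show Yv r (k+1) = X (σ := EVar n) (some (Sum.inr (r, k+1))) from rfl, vars_X]
        simp [esucc]
  refine h1.trans ?_
  intro u hu
  rcases Finset.mem_union.mp hu with h | h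
  · exact Finset.mem_union_left _ (hsub1 (Finsupp.support_tsub h))
  · rw [Finset.mem_singleton] at h
    subst h
    exact Finset.mem_union_right _ (Finset.mem_image_of_mem _ (hsub1 hv))

theorem fX_esucc {n : ℕ} (j : Fin n) (v : EVar n) : fX j (esucc v) = fX j v + 1 := by
  match v with
  | none => simp [fX, esucc]
  | some (Sum.inl (j', k)) =>
      by_cases h : j' = j
      · simp only [fX, esucc, if_pos h]
        push_cast
        rfl
      · simp [fX, esucc, h]
  | some (Sum.inr p) => simp [fX, esucc]

theorem fY_esucc {n : ℕ} (r : Fin n) (v : EVar n) : fY r (esucc v) = fY r v + 1 := by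
  match v with
  | none => simp [fY, esucc]
  | some (Sum.inr (r', k)) =>
      by_cases h : r' = r
      · simp only [fY, esucc, if_pos h]
        push_cast
        rfl
      · simp [fY, esucc, h]
  | some (Sum.inl p) => simp [fY, esucc]

theorem hodX_Dop_le {n : ℕ} (q : EPoly n) (j : Fin n) :
    hodX (Dop q) j ≤ hodX q j + 1 := by
  classical
  rw [hodX_eq, hodX_eq]
  apply Finset.sup_le
  intro v hv
  rcases Finset.mem_union.mp (vars_Dop q hv) with h | h
  · exact le_trans (Finset.le_sup h) (le_add_of_nonneg_right zero_le_one)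
  · obtain ⟨u, hu, rfl⟩ := Finset.mem_image.mp h
    rw [fX_esucc]
    exact add_le_add (Finset.le_sup hu) le_rfl

theorem hodX_Dop_iter_le {n : ℕ} (q : EPoly n) (j : Fin n) (p : ℕ) :
    hodX (Dop^[p] q) j ≤ hodX q j + (p : ℤ) := by
  induction p with
  | zero => simp
  | succ p ih =>
      rw [Function.iterate_succ_apply']
      refine (hodX_Dop_le _ j).trans ?_
      refine (add_le_add ih (le_refl (1 : WithBot ℤ))).trans_eq ?_
      rw [add_assoc]
      norm_cast

theorem noY_of_hodY {n : ℕ} {q : EPoly n} (h : ∀ r', hodY q r' = ⊥) :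
    ∀ (r' : Fin n) (k : ℕ), some (Sum.inr (r', k)) ∉ q.vars := by
  intro r' k hk
  have h2 := Finset.le_sup (f := fY r') hk
  rw [← hodY_eq, h r'] at h2
  simp [fY, le_bot_iff] at h2

theorem noY_Dop {n : ℕ} {q : EPoly n}
    (h : ∀ (r' : Fin n) (k : ℕ), some (Sum.inr (r', k)) ∉ q.vars) :
    ∀ (r' : Fin n) (k : ℕ), some (Sum.inr (r', k)) ∉ (Dop q).vars := by
  intro r' k hk
  rcases Finset.mem_union.mp (vars_Dop q hk) with h1 | h1
  · exact h r' k h1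
  · obtain ⟨u, hu, he⟩ := Finset.mem_image.mp h1
    match u, he with
    | some (Sum.inr (r'', k'')), he =>
        simp only [esucc, Option.some.injEq, Sum.inr.injEq, Prod.mk.injEq] at he
        exact h r'' k'' hu

theorem noY_Dop_iter {n : ℕ} {q : EPoly n}
    (h : ∀ (r' : Fin n) (k : ℕ), some (Sum.inr (r', k)) ∉ q.vars) (p : ℕ) :
    ∀ (r' : Fin n) (k : ℕ), some (Sum.inr (r', k)) ∉ (Dop^[p] q).vars := by
  induction p with
  | zero => exact h
  | succ p ih => rw [Function.iterate_succ_apply']; exact noY_Dop ih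

theorem Dop_add {n : ℕ} (a b : EPoly n) : Dop (a + b) = Dop a + Dop b := by
  rw [Dop]; exact map_add _ _ _

theorem Dop_iter_add {n : ℕ} (p : ℕ) (a b : EPoly n) :
    Dop^[p] (a + b) = Dop^[p] a + Dop^[p] b := by
  induction p with
  | zero => rfl
  | succ p ih => rw [Function.iterate_succ_apply', Function.iterate_succ_apply',
      Function.iterate_succ_apply', ih, Dop_add]

theorem Dop_Yv {n : ℕ} (r : Fin n) (k : ℕ) : Dop (Yv r k) = Yv r (k + 1) := by
  rw [Dop, Yv, mkDerivation_X]

theorem Dop_iter_Yv {n : ℕ} (r : Fin n) (p : ℕ) : Dop^[p] (Yv r 0) = Yv r p := by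
  induction p with
  | zero => rfl
  | succ p ih => rw [Function.iterate_succ_apply', ih, Dop_Yv]

theorem hodY_Yv_add {n : ℕ} (r : Fin n) (p : ℕ) {B : EPoly n}
    (hB : ∀ (r' : Fin n) (k : ℕ), some (Sum.inr (r', k)) ∉ B.vars) :
    hodY (Yv r p + B) r = ((p : ℤ) : WithBot ℤ) := by
  classical
  apply le_antisymm
  · rw [hodY_eq]
    apply Finset.sup_le
    intro u hu
    rcases Finset.mem_union.mp (vars_add_subset _ _ hu) with h1 | h1
    · rw [Yv, vars_X, Finset.mem_singleton] at h1
      subst h1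
      simp [fY]
    · match u with
      | none => simp [fY]
      | some (Sum.inl _) => simp [fY]
      | some (Sum.inr (r', k)) =>
          exact absurd h1 (hB r' k)
  · have hv0 : (some (Sum.inr (r, p)) : EVar n) ∈ (Yv r p + B).vars := by
      rw [mem_vars]
      refine ⟨Finsupp.single (some (Sum.inr (r, p))) 1, ?_, ?_⟩
      · rw [mem_support_iff, coeff_add]
        have h1 : coeff (Finsupp.single (some (Sum.inr (r, p)) : EVar n) 1) (Yv r p) = 1 := by
          rw [Yv]; exact (coeff_X (R := ℝ) (some (Sum.inr (r, p)) : EVar n) _).trans (if_pos rfl)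
        have h2 : coeff (Finsupp.single (some (Sum.inr (r, p)) : EVar n) 1) B = 0 := by
          by_contra h2
          exact hB r p ((mem_vars _).mpr ⟨_, mem_support_iff.mpr h2, by simp⟩)
        rw [h1, h2]; norm_num
      · simp
    have := Finset.le_sup (f := fY r) hv0
    rw [← hodY_eq] at this
    simpa [fY] using this

theorem hodX_mono {n : ℕ} {q q' : EPoly n} (h : q.vars ⊆ q'.vars) (j : Fin n) :
    hodX q j ≤ hodX q' j := by
  rw [hodX_eq, hodX_eq]; exact Finset.sup_mono h

theorem hodX_omega1_le {n : ℕ} (r : Fin n) (w : EPoly n) (l : Fin n) (m : ℕ) (j : Fin n) :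
    hodX (Yv r 0 + w * Xv l m) j ≤ max (hodX w j) (fX j (some (Sum.inl (l, m)))) := by
  classical
  rw [hodX_eq]
  apply Finset.sup_le
  intro u hu
  rcases Finset.mem_union.mp (vars_add_subset _ _ hu) with h1 | h1
  · rw [Yv, vars_X, Finset.mem_singleton] at h1
    subst h1
    simp [fX]
  · rcases Finset.mem_union.mp (vars_mul _ _ h1) with h2 | h2
    · exact le_max_of_le_left (by rw [hodX_eq]; exact Finset.le_sup h2)
    · rw [Xv, vars_X, Finset.mem_singleton] at h2
      subst h2
      exact le_max_right _ _

theorem wb_add_lt {a : WithBot ℤ} {c : ℤ} (p : ℤ) (h : a < ((c : ℤ) : WithBot ℤ)) :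
    a + (p : ℤ) < ((c + p : ℤ) : WithBot ℤ) := by
  induction a with
  | bot => rw [WithBot.bot_add]; exact WithBot.bot_lt_coe _
  | coe a =>
      rw [← WithBot.coe_add]
      rw [WithBot.coe_lt_coe] at h ⊢
      omega

theorem wb_add_le {a : WithBot ℤ} {c : ℤ} (p : ℤ) (h : a ≤ ((c : ℤ) : WithBot ℤ)) :
    a + (p : ℤ) ≤ ((c + p : ℤ) : WithBot ℤ) := by
  induction a with
  | bot => rw [WithBot.bot_add]; exact bot_le
  | coe a =>
      rw [← WithBot.coe_add]
      rw [WithBot.coe_le_coe] at h ⊢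
      omega


/-- **ES lemma (Lemma on `ω₂`).** Under the hypotheses of the previous lemma,
for any `c_i ≤ c̄` the `(c̄ - c_i)`-th total derivative
`ω₂ = D^{c̄ - c_i} ω₁` of `ω₁ = y_r + (v_r/v_l)·x_l^{(d_l - c̄)}` satisfies
`ν_{x_j}(ω₂) < d j - c_i` for `j ∈ S \ {l}`, `ν_{x_j}(ω₂) ≤ d j - c_i`
otherwise, and `ν_{y_r}(ω₂) = c̄ - c_i`. -/
theorem stmt11 {n : ℕ} (v : Fin n → EPoly n) (w : EPoly n) (d : Fin n → ℤ) (cb : ℤ)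
    (l r : Fin n) (hvl : v l ≠ 0) (hvr : v r ≠ 0) (hrl : r ≠ l)
    (hw : v l * w = v r)
    (hvY : ∀ i r', hodY (v i) r' = ⊥)
    (hwY : ∀ r', hodY w r' = ⊥)
    (hES1 : ∀ i j, v j ≠ 0 → hodX (v i) j < ((d j - cb : ℤ) : WithBot ℤ))
    (hES2 : ∀ i j, v j = 0 → hodX (v i) j ≤ ((d j - cb : ℤ) : WithBot ℤ))
    (hES3 : ∀ j, v j ≠ 0 → cb ≤ d j)
    (ci : ℤ) (hci : ci ≤ cb) :
    (∀ j, v j ≠ 0 → j ≠ l →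
      hodX (Dop^[(cb - ci).toNat] (Yv r 0 + w * Xv l (d l - cb).toNat)) j
        < ((d j - ci : ℤ) : WithBot ℤ)) ∧
    (∀ j, (v j = 0 ∨ j = l) →
      hodX (Dop^[(cb - ci).toNat] (Yv r 0 + w * Xv l (d l - cb).toNat)) j
        ≤ ((d j - ci : ℤ) : WithBot ℤ)) ∧
    hodY (Dop^[(cb - ci).toNat] (Yv r 0 + w * Xv l (d l - cb).toNat)) r
        = ((cb - ci : ℤ) : WithBot ℤ) := by
  classical
  set m : ℕ := (d l - cb).toNat with hm
  set p : ℕ := (cb - ci).toNat with hpdef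
  have hp : (p : ℤ) = cb - ci := Int.toNat_of_nonneg (by omega)
  have hw0 : w ≠ 0 := by rintro rfl; rw [mul_zero] at hw; exact hvr hw.symm
  have hvw : w.vars ⊆ (v r).vars := by
    have h := vars_subset_mul_left (σ := EVar n) w hvl
    rwa [hw] at h
  have hodXw : ∀ j, hodX w j ≤ hodX (v r) j := fun j => hodX_mono hvw j
  have hXbound : ∀ j, hodX (Dop^[p] (Yv r 0 + w * Xv l m)) j
      ≤ max (hodX w j) (fX j (some (Sum.inl (l, m)))) + ((p : ℤ) : WithBot ℤ) := fun j =>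
    (hodX_Dop_iter_le _ j p).trans (add_le_add (hodX_omega1_le r w l m j) le_rfl)
  refine ⟨?_, ?_, ?_⟩
  · intro j hvj hjl
    have h1 : fX j (some (Sum.inl (l, m))) = ⊥ := by
      show (if l = j then ((m : ℤ) : WithBot ℤ) else ⊥) = ⊥
      rw [if_neg (fun h => hjl h.symm)]
    have h3 : hodX w j < ((d j - cb : ℤ) : WithBot ℤ) :=
      lt_of_le_of_lt (hodXw j) (hES1 r j hvj)
    refine lt_of_le_of_lt (hXbound j) ?_
    rw [h1, max_eq_left bot_le, hp]
    have := wb_add_lt (cb - ci) h3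
    convert this using 2
    omega
  · intro j hj
    have h3 : max (hodX w j) (fX j (some (Sum.inl (l, m)))) ≤ ((d j - cb : ℤ) : WithBot ℤ) := by
      rcases hj with hj | rfl
      · have hjl : j ≠ l := fun h => hvl (h ▸ hj)
        have h1 : fX j (some (Sum.inl (l, m))) = ⊥ := by
          show (if l = j then ((m : ℤ) : WithBot ℤ) else ⊥) = ⊥
          rw [if_neg (fun h => hjl h.symm)]
        rw [h1, max_eq_left bot_le]
        exact (hodXw j).trans (hES2 r j hj)
      · have h1 : fX j (some (Sum.inl (j, m))) = ((m : ℤ) : WithBot ℤ) := by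
          show (if j = j then ((m : ℤ) : WithBot ℤ) else ⊥) = _
          rw [if_pos rfl]
        rw [h1]
        refine max_le ?_ ?_
        · exact ((hodXw j).trans (le_of_lt (hES1 r j hvl)))
        · rw [WithBot.coe_le_coe, hm]
          have := hES3 j hvl
          omega
    refine le_trans (hXbound j) ?_
    rw [hp]
    have := wb_add_le (cb - ci) h3
    convert this using 2
    omega
  · have hBnoY : ∀ (r' : Fin n) (k : ℕ), some (Sum.inr (r', k)) ∉ (w * Xv l m).vars := by
      intro r' k hk
      rcases Finset.mem_union.mp (vars_mul _ _ hk) with h1 | h1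
      · exact noY_of_hodY hwY r' k h1
      · rw [Xv, vars_X, Finset.mem_singleton] at h1
        exact absurd h1 (by simp)
    rw [Dop_iter_add, Dop_iter_Yv]
    rw [hodY_Yv_add r p (noY_Dop_iter hBnoY p), hp]
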